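/- A two-qubit density matrix ρ has absolutely non-negative conditional entropy — i.e. S(U ρ U†) ≥ S((U ρ U†)^B) for every 4×4 unitary matrix U — if and only if S(ρ) ≥ log 2 (the entropy of ρ is at least one bit). -/

import Mathlib

open Matrix
open scoped ComplexOrder

def IsDensityMatrix {n : Type*} [Fintype n] [DecidableEq n] (ρ : Matrix n n ℂ) : Prop :=
  ρ.PosSemidef ∧ ρ.trace = 1

open scoped Classical in
/-- The von Neumann entropy `S(ρ) = −Σᵢ λᵢ log λᵢ` (natural logarithm), where `λᵢ` are the
eigenvalues of the Hermitian matrix `ρ`; junk value `0` for non-Hermitian matrices. -/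
noncomputable def vnEntropy {n : Type*} [Fintype n] [DecidableEq n]
    (ρ : Matrix n n ℂ) : ℝ :=
  if h : ρ.IsHermitian then -∑ i, h.eigenvalues i * Real.log (h.eigenvalues i) else 0

/-- The reduced density matrix (partial trace over the second factor). -/
noncomputable def reducedA {m n : ℕ} (ρ : Matrix (Fin m × Fin n) (Fin m × Fin n) ℂ) :
    Matrix (Fin m) (Fin m) ℂ :=
  fun a b => ∑ e, ρ (a, e) (b, e)

/-- The reduced density matrix (partial trace over the first factor). -/
noncomputable def reducedB {m n : ℕ} (ρ : Matrix (Fin m × Fin n) (Fin m × Fin n) ℂ) :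
    Matrix (Fin n) (Fin n) ℂ :=
  fun e f => ∑ a, ρ (a, e) (a, f)

namespace AbsEnt

open Polynomial

variable {n : Type*} [Fintype n] [DecidableEq n]

lemma charpoly_conj (V A : Matrix n n ℂ) (hV : V * Vᴴ = 1) :
    (V * A * Vᴴ).charpoly = A.charpoly := by
  set f : Matrix n n ℂ →+* Matrix n n ℂ[X] := (C : ℂ →+* ℂ[X]).mapMatrix with hf
  have key : charmatrix (V * A * Vᴴ) = f V * charmatrix A * f Vᴴ := by
    unfold charmatrix
    rw [Matrix.mul_sub, Matrix.sub_mul]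
    have hcomm : Matrix.scalar n (X : ℂ[X]) * f V = f V * Matrix.scalar n (X : ℂ[X]) :=
      Matrix.scalar_commute (X : ℂ[X]) (fun r => Commute.all _ _) (f V)
    congr 1
    · rw [← hcomm, mul_assoc, ← _root_.map_mul f, hV, _root_.map_one f, mul_one]
    · rw [← _root_.map_mul f, ← _root_.map_mul f]
  rw [Matrix.charpoly, Matrix.charpoly, key, det_mul, det_mul]
  have : det (f V) * det (f Vᴴ) = 1 := by
    rw [← det_mul, ← _root_.map_mul f, hV, _root_.map_one f, det_one]
  calc det (f V) * (charmatrix A).det * det (f Vᴴ)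
      = (charmatrix A).det * (det (f V) * det (f Vᴴ)) := by ring
    _ = (charmatrix A).det := by rw [this, mul_one]

lemma charpoly_diag (d : n → ℂ) :
    (Matrix.diagonal d).charpoly = ∏ i, (X - C (d i)) := by
  have h : charmatrix (Matrix.diagonal d) = Matrix.diagonal (fun i => X - C (d i)) := by
    ext i j
    by_cases h : i = j
    · subst h; simp [charmatrix_apply, Matrix.diagonal_apply_eq]
    · simp [charmatrix_apply, Matrix.diagonal_apply_ne _ h, h]
  rw [Matrix.charpoly, h, det_diagonal]

lemma roots_charpoly_diag (d : n → ℂ) :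
    (Matrix.diagonal d).charpoly.roots = Finset.univ.val.map d := by
  rw [charpoly_diag]
  have : ∏ i, (X - C (d i)) = ((Finset.univ.val.map d).map (fun a => X - C a)).prod := by
    rw [Multiset.map_map]
    rfl
  rw [this, Polynomial.roots_multiset_prod_X_sub_C]

lemma eigenvalues_multiset {V : Matrix n n ℂ} (hV : V ∈ Matrix.unitaryGroup n ℂ)
    (d : n → ℝ) {A : Matrix n n ℂ}
    (hAeq : A = V * Matrix.diagonal (fun i => (d i : ℂ)) * Vᴴ)
    (hA : A.IsHermitian) :
    Finset.univ.val.map hA.eigenvalues = Finset.univ.val.map d := by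
  have hVV : V * Vᴴ = 1 := by
    simpa [Matrix.star_eq_conjTranspose] using (Matrix.mem_unitaryGroup_iff).mp hV
  have hWW : (hA.eigenvectorUnitary : Matrix n n ℂ) * (hA.eigenvectorUnitary : Matrix n n ℂ)ᴴ = 1 := by
    simpa [Matrix.star_eq_conjTranspose] using
      (Matrix.mem_unitaryGroup_iff).mp (hA.eigenvectorUnitary).2
  have h1 : A.charpoly = (Matrix.diagonal (fun i => (d i : ℂ))).charpoly := by
    rw [hAeq, charpoly_conj _ _ hVV]
  have h2 : A.charpoly = (Matrix.diagonal (fun i => ((hA.eigenvalues i : ℝ) : ℂ))).charpoly := by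
    conv_lhs => rw [hA.spectral_theorem]
    rw [Unitary.conjStarAlgAut_apply, Matrix.star_eq_conjTranspose, charpoly_conj _ _ hWW]
    rfl
  have hroots := congrArg Polynomial.roots (h2.symm.trans h1)
  rw [roots_charpoly_diag, roots_charpoly_diag] at hroots
  have hthis : Finset.univ.val.map (fun i => ((hA.eigenvalues i : ℝ) : ℂ))
      = (Finset.univ.val.map hA.eigenvalues).map (fun x : ℝ => (x : ℂ)) := by
    rw [Multiset.map_map]; rfl
  have hd : Finset.univ.val.map (fun i => ((d i : ℝ) : ℂ))
      = (Finset.univ.val.map d).map (fun x : ℝ => (x : ℂ)) := by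
    rw [Multiset.map_map]; rfl
  rw [hthis, hd] at hroots
  exact Multiset.map_injective (fun a b h => by exact_mod_cast h) hroots

omit [DecidableEq n] in
lemma sum_comp_of_map_eq {f g : n → ℝ}
    (h : Finset.univ.val.map f = Finset.univ.val.map g) (F : ℝ → ℝ) :
    ∑ i, F (f i) = ∑ i, F (g i) := by
  calc ∑ i, F (f i) = ((Finset.univ.val.map f).map F).sum := by rw [Multiset.map_map]; rfl
    _ = ((Finset.univ.val.map g).map F).sum := by rw [h]
    _ = ∑ i, F (g i) := by rw [Multiset.map_map]; rfl

lemma vnEntropy_eq {A : Matrix n n ℂ} (hA : A.IsHermitian) :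
    vnEntropy A = -∑ i, hA.eigenvalues i * Real.log (hA.eigenvalues i) := by
  simp [vnEntropy, hA]

lemma sum_F_eigenvalues_conj {U : Matrix n n ℂ} (hU : U ∈ Matrix.unitaryGroup n ℂ)
    {ρ : Matrix n n ℂ} (hρ : ρ.IsHermitian) (hσ : (U * ρ * Uᴴ).IsHermitian) (F : ℝ → ℝ) :
    ∑ i, F (hσ.eigenvalues i) = ∑ i, F (hρ.eigenvalues i) := by
  have hmem : U * (hρ.eigenvectorUnitary : Matrix n n ℂ) ∈ Matrix.unitaryGroup n ℂ :=
    mul_mem hU (hρ.eigenvectorUnitary).2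
  have hAeq : U * ρ * Uᴴ = (U * (hρ.eigenvectorUnitary : Matrix n n ℂ)) *
      Matrix.diagonal (fun i => ((hρ.eigenvalues i : ℝ) : ℂ)) *
      (U * (hρ.eigenvectorUnitary : Matrix n n ℂ))ᴴ := by
    conv_lhs => rw [hρ.spectral_theorem]
    rw [Unitary.conjStarAlgAut_apply, Matrix.star_eq_conjTranspose, conjTranspose_mul]
    have : Matrix.diagonal (RCLike.ofReal ∘ hρ.eigenvalues) =
        Matrix.diagonal (fun i => ((hρ.eigenvalues i : ℝ) : ℂ)) := rfl
    rw [this]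
    noncomm_ring
  exact sum_comp_of_map_eq (eigenvalues_multiset hmem _ hAeq hσ) F

omit [DecidableEq n] in
lemma isHermitian_conj {U ρ : Matrix n n ℂ} (hρ : ρ.IsHermitian) :
    (U * ρ * Uᴴ).IsHermitian := by
  simpa using isHermitian_mul_mul_conjTranspose U hρ

lemma vnEntropy_conj {U : Matrix n n ℂ} (hU : U ∈ Matrix.unitaryGroup n ℂ)
    {ρ : Matrix n n ℂ} (hρ : ρ.IsHermitian) :
    vnEntropy (U * ρ * Uᴴ) = vnEntropy ρ := by
  have hσ := isHermitian_conj (U := U) hρ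
  rw [vnEntropy_eq hσ, vnEntropy_eq hρ]
  exact congrArg Neg.neg
    (sum_F_eigenvalues_conj hU hρ hσ (fun x => x * Real.log x))

lemma sum_eigenvalues_eq_trace {A : Matrix n n ℂ} (hA : A.IsHermitian) :
    ((∑ i, hA.eigenvalues i : ℝ) : ℂ) = A.trace := by
  conv_rhs => rw [hA.spectral_theorem]
  rw [Unitary.conjStarAlgAut_apply, Matrix.star_eq_conjTranspose, Matrix.trace_mul_cycle]
  have hWW : (hA.eigenvectorUnitary : Matrix n n ℂ)ᴴ * (hA.eigenvectorUnitary : Matrix n n ℂ) = 1 := by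
    simpa [Matrix.star_eq_conjTranspose] using
      (Matrix.mem_unitaryGroup_iff').mp (hA.eigenvectorUnitary).2
  rw [hWW, Matrix.one_mul, Matrix.trace_diagonal]
  push_cast
  rfl

lemma two_point_entropy_le {p q : ℝ} (hp : 0 ≤ p) (hq : 0 ≤ q) (hpq : p + q = 1) :
    -(p * Real.log p + q * Real.log q) ≤ Real.log 2 := by
  have h := Real.concaveOn_negMulLog.2 (Set.mem_Ici.2 hp) (Set.mem_Ici.2 hq)
    (by norm_num : (0:ℝ) ≤ (1:ℝ)/2) (by norm_num : (0:ℝ) ≤ (1:ℝ)/2) (by norm_num)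
  have hmid : ((1:ℝ)/2) • p + ((1:ℝ)/2) • q = 1/2 := by
    simp only [smul_eq_mul]; nlinarith
  rw [hmid] at h
  have hval : Real.negMulLog (1/2 : ℝ) = 1/2 * Real.log 2 := by
    rw [Real.negMulLog, one_div, Real.log_inv]
    ring
  rw [hval] at h
  simp only [smul_eq_mul, Real.negMulLog] at h
  nlinarith

lemma eigenvalues_half_id (h : ((1/2 : ℂ) • (1 : Matrix (Fin 2) (Fin 2) ℂ)).IsHermitian)
    (i : Fin 2) : h.eigenvalues i = 1/2 := by
  have hv := h.mulVec_eigenvectorBasis i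
  have hmv : ((1/2 : ℂ) • (1 : Matrix (Fin 2) (Fin 2) ℂ)) *ᵥ ⇑(h.eigenvectorBasis i)
      = (1/2 : ℂ) • ⇑(h.eigenvectorBasis i) := by
    rw [Matrix.smul_mulVec, Matrix.one_mulVec]
  rw [hmv] at hv
  have hb := (h.eigenvectorBasis).toBasis.ne_zero i
  rw [OrthonormalBasis.coe_toBasis] at hb
  have hne : ⇑(h.eigenvectorBasis i) ≠ 0 := by
    intro hcon
    exact hb (by ext j; exact congrFun hcon j)
  obtain ⟨j, hj⟩ := Function.ne_iff.mp hne
  have hval := congrFun hv j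
  simp only [Pi.smul_apply, smul_eq_mul, Complex.real_smul] at hval
  have h2 : ((h.eigenvalues i : ℝ) : ℂ) = 1/2 := mul_right_cancel₀ hj (hval.symm)
  have h3 : ((h.eigenvalues i : ℝ) : ℂ) = ((1/2 : ℝ) : ℂ) := by rw [h2]; norm_num
  exact Complex.ofReal_injective h3

lemma isHermitian_half_id : ((1/2 : ℂ) • (1 : Matrix (Fin 2) (Fin 2) ℂ)).IsHermitian := by
  simp [Matrix.IsHermitian, Matrix.conjTranspose_smul]

lemma vnEntropy_half_id :
    vnEntropy ((1/2 : ℂ) • (1 : Matrix (Fin 2) (Fin 2) ℂ)) = Real.log 2 := by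
  rw [vnEntropy_eq isHermitian_half_id]
  rw [Fin.sum_univ_two, eigenvalues_half_id isHermitian_half_id 0,
    eigenvalues_half_id isHermitian_half_id 1]
  rw [show Real.log (1/2) = -Real.log 2 by rw [one_div, Real.log_inv]]
  ring

lemma conj_density {U ρ : Matrix n n ℂ} (hU : U ∈ Matrix.unitaryGroup n ℂ)
    (hρ : IsDensityMatrix ρ) : IsDensityMatrix (U * ρ * Uᴴ) := by
  refine ⟨hρ.1.mul_mul_conjTranspose_same U, ?_⟩
  rw [Matrix.trace_mul_cycle]
  have hUU : Uᴴ * U = 1 := by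
    simpa [Matrix.star_eq_conjTranspose] using (Matrix.mem_unitaryGroup_iff').mp hU
  rw [hUU, Matrix.one_mul, hρ.2]

lemma reducedB_density {m n : ℕ} {ρ : Matrix (Fin m × Fin n) (Fin m × Fin n) ℂ}
    (hρ : IsDensityMatrix ρ) : IsDensityMatrix (reducedB ρ) := by
  obtain ⟨⟨hherm, hpos⟩, htr⟩ := hρ
  refine ⟨posSemidef_iff_dotProduct_mulVec.mpr ⟨?_, ?_⟩, ?_⟩
  · ext e f
    simp only [Matrix.conjTranspose_apply, reducedB, star_sum]
    refine Finset.sum_congr rfl fun a _ => ?_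
    exact congrFun (congrFun hherm (a, e)) (a, f) |>.symm ▸ rfl
  · intro x
    have key : dotProduct (star x) (reducedB ρ *ᵥ x)
        = ∑ a : Fin m, dotProduct (star (fun p : Fin m × Fin n => if p.1 = a then x p.2 else 0))
            (ρ *ᵥ (fun p : Fin m × Fin n => if p.1 = a then x p.2 else 0)) := by
      have hterm : ∀ a : Fin m,
          dotProduct (star (fun p : Fin m × Fin n => if p.1 = a then x p.2 else 0))
            (ρ *ᵥ (fun p : Fin m × Fin n => if p.1 = a then x p.2 else 0))
          = ∑ e, ∑ f, star (x e) * (ρ (a, e) (a, f) * x f) := by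
        intro a
        have hmv : ∀ e : Fin n, (ρ *ᵥ (fun p : Fin m × Fin n => if p.1 = a then x p.2 else 0)) (a, e)
            = ∑ f, ρ (a, e) (a, f) * x f := by
          intro e
          rw [Matrix.mulVec, dotProduct, Fintype.sum_prod_type]
          rw [Finset.sum_eq_single a]
          · simp
          · intro b _ hb; simp [hb]
          · simp
        rw [dotProduct, Fintype.sum_prod_type]
        rw [Finset.sum_eq_single a]
        · refine Finset.sum_congr rfl fun e _ => ?_
          simp [hmv e, Finset.mul_sum]
        · intro b _ hb; simp [hb]
        · simp
      rw [Finset.sum_congr rfl (fun a _ => hterm a)]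
      simp only [dotProduct, Matrix.mulVec, reducedB, Pi.star_apply,
        Finset.sum_mul, Finset.mul_sum]
      refine Eq.trans (Finset.sum_congr rfl fun e _ => Finset.sum_comm) ?_
      rw [Finset.sum_comm]
    rw [key]
    exact Finset.sum_nonneg fun a _ => (posSemidef_iff_dotProduct_mulVec.mp ⟨hherm, hpos⟩).2 _
  · have : (reducedB ρ).trace = ρ.trace := by
      simp only [Matrix.trace, Matrix.diag, reducedB]
      rw [Finset.sum_comm, Fintype.sum_prod_type]
    rw [this, htr]

noncomputable def bell : Matrix (Fin 2 × Fin 2) (Fin 2 × Fin 2) ℂ :=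
  fun p q => if p.1 + p.2 = q.1 then
      (if p.1 = 0 then ((Real.sqrt 2 : ℂ))⁻¹ else if q.2 = 0 then ((Real.sqrt 2 : ℂ))⁻¹
        else -((Real.sqrt 2 : ℂ))⁻¹) else 0

lemma h2c : (Real.sqrt 2 : ℂ) * (Real.sqrt 2 : ℂ) = 2 := by
  norm_cast
  exact Real.mul_self_sqrt (by norm_num)

lemma bell_mem : bell ∈ Matrix.unitaryGroup (Fin 2 × Fin 2) ℂ := by
  rw [Matrix.mem_unitaryGroup_iff']
  ext ⟨c, d⟩ ⟨c', d'⟩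
  rw [Matrix.mul_apply]
  simp only [Matrix.star_apply]
  fin_cases c <;> fin_cases d <;> fin_cases c' <;> fin_cases d' <;>
    simp [bell, Fintype.sum_prod_type, Fin.sum_univ_two, Matrix.one_apply, map_inv₀,
      Complex.conj_ofReal, ← mul_inv, h2c] <;>
    norm_num [Prod.ext_iff]

lemma reducedB_bell (dr : Fin 2 × Fin 2 → ℝ) (hsum : ∑ k, dr k = 1) :
    reducedB (bell * Matrix.diagonal (fun k => (dr k : ℂ)) * bellᴴ)
      = (1/2 : ℂ) • 1 := by
  have hsumC : ((dr (0,0) : ℂ)) + dr (0,1) + dr (1,0) + dr (1,1) = 1 := by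
    have := congrArg (fun r : ℝ => (r : ℂ)) hsum
    push_cast [Fintype.sum_prod_type, Fin.sum_univ_two] at this
    linear_combination this
  ext e f
  simp only [reducedB, Matrix.mul_apply, Matrix.mul_diagonal, Matrix.conjTranspose_apply]
  fin_cases e <;> fin_cases f <;>
    simp [bell, Fintype.sum_prod_type, Fin.sum_univ_two, Matrix.one_apply, map_inv₀,
      Complex.conj_ofReal, Matrix.smul_apply, Prod.ext_iff] <;>
    field_simp <;>
    (simp only [Prod.mk_zero_zero, Prod.mk_one_one] at hsumC ⊢;
     linear_combination (2:ℂ) * hsumC - h2c)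

end AbsEnt

theorem absolutely_nonneg_conditional_entropy_iff
    (ρ : Matrix (Fin 2 × Fin 2) (Fin 2 × Fin 2) ℂ) (hρ : IsDensityMatrix ρ) :
    (∀ U ∈ Matrix.unitaryGroup (Fin 2 × Fin 2) ℂ,
        vnEntropy (reducedB (U * ρ * Uᴴ)) ≤ vnEntropy (U * ρ * Uᴴ)) ↔
      Real.log 2 ≤ vnEntropy ρ := by
  obtain ⟨hpsd, htr⟩ := hρ
  have hherm : ρ.IsHermitian := hpsd.1
  have hsum : ∑ k, hherm.eigenvalues k = 1 := by
    have h := AbsEnt.sum_eigenvalues_eq_trace hherm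
    rw [htr] at h
    exact_mod_cast h
  constructor
  · intro h
    set W : Matrix (Fin 2 × Fin 2) (Fin 2 × Fin 2) ℂ :=
      (hherm.eigenvectorUnitary : Matrix (Fin 2 × Fin 2) (Fin 2 × Fin 2) ℂ) with hW
    have hWmem : W ∈ Matrix.unitaryGroup (Fin 2 × Fin 2) ℂ := (hherm.eigenvectorUnitary).2
    have hWHmem : Wᴴ ∈ Matrix.unitaryGroup (Fin 2 × Fin 2) ℂ := by
      rw [← Matrix.star_eq_conjTranspose]
      exact Unitary.star_mem hWmem
    have hU : AbsEnt.bell * Wᴴ ∈ Matrix.unitaryGroup (Fin 2 × Fin 2) ℂ :=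
      mul_mem AbsEnt.bell_mem hWHmem
    have hWW : ∀ X : Matrix (Fin 2 × Fin 2) (Fin 2 × Fin 2) ℂ, Wᴴ * (W * X) = X := by
      intro X
      have h1 : Wᴴ * W = 1 := by
        simpa [Matrix.star_eq_conjTranspose] using (Matrix.mem_unitaryGroup_iff').mp hWmem
      rw [← Matrix.mul_assoc, h1, Matrix.one_mul]
    have hσ : (AbsEnt.bell * Wᴴ) * ρ * (AbsEnt.bell * Wᴴ)ᴴ
        = AbsEnt.bell * Matrix.diagonal (fun k => ((hherm.eigenvalues k : ℝ) : ℂ))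
          * AbsEnt.bellᴴ := by
      conv_lhs => rw [hherm.spectral_theorem]
      rw [Unitary.conjStarAlgAut_apply, Matrix.star_eq_conjTranspose, Matrix.conjTranspose_mul,
        Matrix.conjTranspose_conjTranspose]
      have hdiag : Matrix.diagonal (RCLike.ofReal ∘ hherm.eigenvalues) =
          Matrix.diagonal (fun k => ((hherm.eigenvalues k : ℝ) : ℂ)) := rfl
      rw [hdiag]
      simp only [Matrix.mul_assoc, ← hW]
      rw [hWW, hWW]
    have hred : reducedB ((AbsEnt.bell * Wᴴ) * ρ * (AbsEnt.bell * Wᴴ)ᴴ)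
        = (1/2 : ℂ) • 1 := by
      rw [hσ]
      exact AbsEnt.reducedB_bell _ hsum
    have hle := h (AbsEnt.bell * Wᴴ) hU
    rw [hred, AbsEnt.vnEntropy_half_id, AbsEnt.vnEntropy_conj hU hherm] at hle
    exact hle
  · intro hent U hU
    have hσdm := AbsEnt.conj_density hU ⟨hpsd, htr⟩
    have hBdm := AbsEnt.reducedB_density hσdm
    have hB : (reducedB (U * ρ * Uᴴ)).IsHermitian := hBdm.1.1
    have hBsum : ∑ k, hB.eigenvalues k = 1 := by
      have h := AbsEnt.sum_eigenvalues_eq_trace hB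
      rw [hBdm.2] at h
      exact_mod_cast h
    have hbound : vnEntropy (reducedB (U * ρ * Uᴴ)) ≤ Real.log 2 := by
      rw [AbsEnt.vnEntropy_eq hB, Fin.sum_univ_two]
      refine AbsEnt.two_point_entropy_le (hBdm.1.eigenvalues_nonneg 0)
        (hBdm.1.eigenvalues_nonneg 1) ?_
      rw [← Fin.sum_univ_two (fun i => hB.eigenvalues i)]
      exact hBsum
    calc vnEntropy (reducedB (U * ρ * Uᴴ)) ≤ Real.log 2 := hbound
      _ ≤ vnEntropy ρ := hent
      _ = vnEntropy (U * ρ * Uᴴ) := (AbsEnt.vnEntropy_conj hU hherm).symm
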